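/- Let S be a nonempty index set (the set of SNR values), and for each σ ∈ S let g_σ : ℝ → ℝ be a nonnegative Lebesgue-integrable function with ∫_ℝ g_σ = 1. Let f_u : ℝ → ℝ be a nonnegative, nondecreasing, continuous function (the same function for all σ ∈ S), and define B_σ(t) = ∫_{(-∞, t]} f_u(r) g_σ(r) dr + ∫_{(t, ∞)} g_σ(r) dr. If r₁ ∈ ℝ satisfies f_u(r₁) = 1, then for every σ ∈ S and every t ∈ ℝ, B_σ(r₁) ≤ B_σ(t); that is, the single parameter r₁ simultaneously minimizes B_σ for all σ. -/

import Mathlib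

open MeasureTheory Set

/-- Corollary 1 / Theorem 3: when the conditional union bound `f_u` does not depend
on the SNR, a root `r₁` of `f_u(r) = 1` simultaneously minimizes the parameterized
Gallager bound `B_σ` for every SNR `σ`. -/
theorem stmt9
    {S : Type*} [Nonempty S]
    (g : S → ℝ → ℝ) (hg0 : ∀ σ r, 0 ≤ g σ r)
    (hgint : ∀ σ, Integrable (g σ)) (hg1 : ∀ σ, ∫ r, g σ r = 1)
    (f_u : ℝ → ℝ) (hf0 : ∀ r, 0 ≤ f_u r) (hfmono : Monotone f_u)
    (hfcont : Continuous f_u)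
    (B : S → ℝ → ℝ)
    (hB : ∀ σ t, B σ t = (∫ r in Iic t, f_u r * g σ r) + ∫ r in Ioi t, g σ r)
    (r₁ : ℝ) (hr₁ : f_u r₁ = 1) :
    ∀ σ : S, ∀ t : ℝ, B σ r₁ ≤ B σ t := by
  intro σ t
  -- auxiliary integrability
  have aux : ∀ c : ℝ, Integrable (fun r => f_u (min r c) * g σ r) := by
    intro c
    refine (hgint σ).bdd_mul (c := f_u c) ?_ (Filter.Eventually.of_forall ?_)
    · exact (hfcont.comp (continuous_id.min continuous_const)).aestronglyMeasurable
    · intro r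
      rw [Real.norm_eq_abs, abs_of_nonneg (hf0 _)]
      exact hfmono (min_le_right _ _)
  have hIic : ∀ c : ℝ, IntegrableOn (fun r => f_u r * g σ r) (Iic c) := by
    intro c
    refine ((aux c).integrableOn).congr_fun ?_ measurableSet_Iic
    intro x hx
    simp [min_eq_left (mem_Iic.mp hx)]
  have hIoc : ∀ a b : ℝ, IntegrableOn (fun r => f_u r * g σ r) (Ioc a b) :=
    fun a b => (hIic b).mono_set Ioc_subset_Iic_self
  have hgIoc : ∀ a b : ℝ, IntegrableOn (g σ) (Ioc a b) := fun a b => (hgint σ).integrableOn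
  have hgIoi : ∀ a : ℝ, IntegrableOn (g σ) (Ioi a) := fun a => (hgint σ).integrableOn
  rw [hB, hB]
  rcases le_total r₁ t with h | h
  · -- split Iic t = Iic r₁ ∪ Ioc r₁ t, Ioi r₁ = Ioc r₁ t ∪ Ioi t
    have e1 : (∫ r in Iic t, f_u r * g σ r)
        = (∫ r in Iic r₁, f_u r * g σ r) + ∫ r in Ioc r₁ t, f_u r * g σ r := by
      rw [← setIntegral_union (Iic_disjoint_Ioc le_rfl) measurableSet_Ioc
        (hIic r₁) (hIoc r₁ t), Iic_union_Ioc_eq_Iic h]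
    have e2 : (∫ r in Ioi r₁, g σ r)
        = (∫ r in Ioc r₁ t, g σ r) + ∫ r in Ioi t, g σ r := by
      rw [← setIntegral_union (Ioc_disjoint_Ioi le_rfl) measurableSet_Ioi
        (hgIoc r₁ t) (hgIoi t), Ioc_union_Ioi_eq_Ioi h]
    rw [e1, e2]
    have key : (∫ r in Ioc r₁ t, g σ r) ≤ ∫ r in Ioc r₁ t, f_u r * g σ r := by
      refine setIntegral_mono_on (hgIoc r₁ t) (hIoc r₁ t) measurableSet_Ioc ?_
      intro x hx
      have h1 : (1 : ℝ) ≤ f_u x := hr₁ ▸ hfmono (le_of_lt hx.1)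
      nlinarith [hg0 σ x]
    linarith
  · have e1 : (∫ r in Iic r₁, f_u r * g σ r)
        = (∫ r in Iic t, f_u r * g σ r) + ∫ r in Ioc t r₁, f_u r * g σ r := by
      rw [← setIntegral_union (Iic_disjoint_Ioc le_rfl) measurableSet_Ioc
        (hIic t) (hIoc t r₁), Iic_union_Ioc_eq_Iic h]
    have e2 : (∫ r in Ioi t, g σ r)
        = (∫ r in Ioc t r₁, g σ r) + ∫ r in Ioi r₁, g σ r := by
      rw [← setIntegral_union (Ioc_disjoint_Ioi le_rfl) measurableSet_Ioi
        (hgIoc t r₁) (hgIoi r₁), Ioc_union_Ioi_eq_Ioi h]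
    rw [e1, e2]
    have key : (∫ r in Ioc t r₁, f_u r * g σ r) ≤ ∫ r in Ioc t r₁, g σ r := by
      refine setIntegral_mono_on (hIoc t r₁) (hgIoc t r₁) measurableSet_Ioc ?_
      intro x hx
      have h1 : f_u x ≤ 1 := hr₁ ▸ hfmono hx.2
      nlinarith [hg0 σ x]
    linarith
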